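/- Let q ∈ ℂ, q ≠ 0, q² ≠ 1, and let D_{q^{-2}} be the q-difference operator D_{q^{-2}}(f)(x) = (f(x) − f(q^{-2}x))/((1−q^{-2})x) on polynomials. In the quantum plane algebra O(ℂ²_q) with its U_q(gl₂)-module algebra structure, for polynomials g, h in one variable: F ▷ (g(x)h(y)) = q^{-1/2} g(q^{1/2}x) x D_{q^{-2}}(h(q^{1/2}·))(y). -/
import Mathlib
open Polynomial

noncomputable def qDiff (c : ℂ) (p : Polynomial ℂ) : Polynomial ℂ :=
  Polynomial.C ((1 - c)⁻¹) * Polynomial.divX (p - p.comp (Polynomial.C c * Polynomial.X))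

lemma qDiff_add (c : ℂ) (p q : Polynomial ℂ) :
    qDiff c (p + q) = qDiff c p + qDiff c q := by
  unfold qDiff
  rw [add_comp, show p + q - (p.comp (C c * X) + q.comp (C c * X)) =
    (p - p.comp (C c * X)) + (q - q.comp (C c * X)) by ring, divX_add, mul_add]

lemma qDiff_monomial (c : ℂ) (n : ℕ) (a : ℂ) :
    qDiff c (monomial n a) = C ((1 - c)⁻¹ * (a - a * c ^ n)) * divX (X ^ n) := by
  unfold qDiff
  rw [monomial_comp, ← C_mul_X_pow_eq_monomial, mul_pow, ← C_pow]
  have h : C a * X ^ n - C a * (C (c ^ n) * X ^ n) = C (a - a * c ^ n) * X ^ n := by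
    rw [C_sub, C_mul]; ring
  rw [h, divX_C_mul, ← mul_assoc, ← C_mul]

lemma monomial_comp_CrX (r : ℂ) (n : ℕ) (b : ℂ) :
    (monomial n b).comp (C r * X) = monomial n (b * r ^ n) := by
  rw [monomial_comp, mul_pow, ← C_pow, ← mul_assoc, ← C_mul, C_mul_X_pow_eq_monomial]

theorem statement8 {Z : Type*} [Ring Z] [Algebra ℂ Z]
    (q r : ℂ) (hq0 : q ≠ 0) (hq2 : q ^ 2 ≠ 1) (hr : r ^ 2 = q)
    (x y : Z) (hxy : x * y = q • (y * x))
    (aE aF aK₁ aK₂ aK₁i aK₂i : Z →ₗ[ℂ] Z)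
    (hK1mul : ∀ z w : Z, aK₁ (z * w) = aK₁ z * aK₁ w) (hK1one : aK₁ 1 = 1)
    (hK2mul : ∀ z w : Z, aK₂ (z * w) = aK₂ z * aK₂ w) (hK2one : aK₂ 1 = 1)
    (hK1imul : ∀ z w : Z, aK₁i (z * w) = aK₁i z * aK₁i w) (hK1ione : aK₁i 1 = 1)
    (hK2imul : ∀ z w : Z, aK₂i (z * w) = aK₂i z * aK₂i w) (hK2ione : aK₂i 1 = 1)
    (hK1inv : ∀ z : Z, aK₁ (aK₁i z) = z) (hK1inv' : ∀ z : Z, aK₁i (aK₁ z) = z)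
    (hK2inv : ∀ z : Z, aK₂ (aK₂i z) = z) (hK2inv' : ∀ z : Z, aK₂i (aK₂ z) = z)
    (hK1x : aK₁ x = r⁻¹ • x) (hK1y : aK₁ y = y)
    (hK2x : aK₂ x = x) (hK2y : aK₂ y = r⁻¹ • y)
    (hEx : aE x = y) (hEy : aE y = 0) (hFx : aF x = 0) (hFy : aF y = x)
    (hE1 : aE 1 = 0) (hF1 : aF 1 = 0)
    (hEmod : ∀ z w : Z, aE (z * w) = aE z * aK₁ (aK₂i w) + aK₁i (aK₂ z) * aE w)
    (hFmod : ∀ z w : Z, aF (z * w) = aF z * aK₁ (aK₂i w) + aK₁i (aK₂ z) * aF w) :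
    ∀ g h : Polynomial ℂ,
      aF (Polynomial.aeval x g * Polynomial.aeval y h) =
        r⁻¹ • (Polynomial.aeval x (g.comp (Polynomial.C r * Polynomial.X)) *
          (x * Polynomial.aeval y
            (qDiff ((q ^ 2)⁻¹) (h.comp (Polynomial.C r * Polynomial.X))))) := by
  have hr0 : r ≠ 0 := by
    intro h0; apply hq0; rw [← hr, h0]; ring
  have hs0 : (1 : ℂ) - (q ^ 2)⁻¹ ≠ 0 := by
    intro h0
    apply hq2
    have h1 : (q ^ 2)⁻¹ = 1 := by linear_combination -h0
    exact inv_eq_one.mp h1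
  have hu1 : (1 - (q ^ 2)⁻¹)⁻¹ * (1 - (q ^ 2)⁻¹) = 1 := inv_mul_cancel₀ hs0
  have hrinv : r⁻¹ * r = 1 := inv_mul_cancel₀ hr0
  -- inverse-operator values on generators
  have hK2ix : aK₂i x = x := by have := hK2inv' x; rwa [hK2x] at this
  have hK1iy : aK₁i y = y := by have := hK1inv' y; rwa [hK1y] at this
  have hK1ix : aK₁i x = r • x := by
    have h1 := hK1inv' x
    rw [hK1x, map_smul] at h1
    calc aK₁i x = r • (r⁻¹ • aK₁i x) := by
          rw [smul_smul, mul_inv_cancel₀ hr0, one_smul]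
      _ = r • x := by rw [h1]
  have hK2iy : aK₂i y = r • y := by
    have h1 := hK2inv' y
    rw [hK2y, map_smul] at h1
    calc aK₂i y = r • (r⁻¹ • aK₂i y) := by
          rw [smul_smul, mul_inv_cancel₀ hr0, one_smul]
      _ = r • y := by rw [h1]
  have hAy : ∀ n : ℕ, aK₁ (aK₂i (y ^ n)) = r ^ n • y ^ n := by
    intro n; induction n with
    | zero => simp [hK2ione, hK1one]
    | succ n ih =>
        rw [pow_succ', hK2imul, hK1mul, ih, hK2iy, map_smul, hK1y,
          smul_mul_assoc, mul_smul_comm, smul_smul, ← pow_succ', ← pow_succ']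
  have hBx : ∀ m : ℕ, aK₁i (aK₂ (x ^ m)) = r ^ m • x ^ m := by
    intro m; induction m with
    | zero => simp [hK2one, hK1ione]
    | succ m ih =>
        rw [pow_succ', hK2mul, hK1imul, ih, hK2x, hK1ix,
          smul_mul_assoc, mul_smul_comm, smul_smul, ← pow_succ', ← pow_succ']
  have hFxpow : ∀ m : ℕ, aF (x ^ m) = 0 := by
    intro m; induction m with
    | zero => simpa using hF1
    | succ m ih => rw [pow_succ', hFmod, hFx, ih]; simp
  have hyx : y * x = q⁻¹ • (x * y) := by
    rw [hxy, smul_smul, inv_mul_cancel₀ hq0, one_smul]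
  -- the coefficient sequence
  set d : ℕ → ℂ := fun n => r ^ n * (1 - ((q ^ 2)⁻¹) ^ (n + 1)) * (1 - (q ^ 2)⁻¹)⁻¹
    with hd
  have hd0 : d 0 = 1 := by
    simp only [hd, pow_zero, zero_add, pow_one, one_mul]
    exact mul_inv_cancel₀ hs0
  have hkey2 : ∀ n : ℕ, q⁻¹ * r⁻¹ * r ^ n = r ^ (n + 1) * (q ^ 2)⁻¹ := by
    intro n
    rw [← hr]
    field_simp
    ring
  have hdrec : ∀ n : ℕ, d (n + 1) = r ^ (n + 1) + q⁻¹ * (r⁻¹ * d n) := by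
    intro n
    simp only [hd]
    linear_combination r ^ (n + 1) * hu1 -
      (1 - ((q ^ 2)⁻¹) ^ (n + 1)) * (1 - (q ^ 2)⁻¹)⁻¹ * hkey2 n
  have hFypow : ∀ n : ℕ, aF (y ^ (n + 1)) = d n • (x * y ^ n) := by
    intro n; induction n with
    | zero => rw [pow_one, hFy, hd0, one_smul, pow_zero, mul_one]
    | succ n ih =>
        have e1 : y * (x * y ^ n) = q⁻¹ • (x * y ^ (n + 1)) := by
          rw [← mul_assoc, hyx, smul_mul_assoc, mul_assoc, ← pow_succ']
        rw [pow_succ' y (n + 1), hFmod, hFy, hAy, ih, hK2y, map_smul, hK1iy,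
          hdrec n]
        simp only [smul_mul_assoc, mul_smul_comm, smul_smul]
        rw [e1, smul_smul,
          show d n * r⁻¹ * q⁻¹ = q⁻¹ * (r⁻¹ * d n) by ring, add_smul]
  have hmono : ∀ (m n : ℕ),
      aF (x ^ m * y ^ (n + 1)) = (r ^ m * d n) • (x ^ m * (x * y ^ n)) := by
    intro m n
    rw [hFmod, hFxpow, hBx, hFypow, zero_mul, zero_add, smul_mul_assoc,
      mul_smul_comm, smul_smul]
  -- main induction
  intro g h
  induction g using Polynomial.induction_on' with
  | add p p' hp hp' =>
      simp only [map_add, add_mul, add_comp, smul_add]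
      rw [hp, hp']
  | monomial m a =>
      induction h using Polynomial.induction_on' with
      | add p p' hp hp' =>
          simp only [map_add, mul_add, add_comp, qDiff_add, smul_add]
          rw [hp, hp']
      | monomial n b =>
          rw [monomial_comp_CrX, monomial_comp_CrX, qDiff_monomial]
          cases n with
          | zero =>
              simp only [pow_zero, divX_one, mul_zero, map_zero, mul_one,
                aeval_monomial, Algebra.algebraMap_eq_smul_one, smul_mul_assoc,
                mul_smul_comm, one_mul, smul_smul, map_smul, smul_zero]
              rw [hFxpow, smul_zero]
          | succ n =>
              rw [divX_X_pow]
              simp only [Nat.succ_ne_zero, if_false, Nat.add_sub_cancel]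
              simp only [aeval_monomial, map_mul, aeval_C, map_pow, aeval_X,
                Algebra.algebraMap_eq_smul_one, _root_.smul_pow, one_pow, smul_mul_assoc,
                mul_smul_comm, one_mul, mul_one, smul_smul, map_smul]
              rw [hmono, smul_smul]
              congr 1
              simp only [hd]
              linear_combination
                (a * b * r ^ m * (((q ^ 2)⁻¹) ^ (n + 1) - 1) *
                  (1 - (q ^ 2)⁻¹)⁻¹ * r ^ n) * hrinv
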